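/- arXiv:2103.00283 — 2 statements merged into one kernel-verified Lean document; each statement's English description precedes it below -/
import Mathlib

section
/- For every pair of sets F and G, the class of linearly ordered sets equipped with an F-indexed family of order automorphisms and a G-indexed family of order antiautomorphisms, all having a common center (common fixed point), has the strong amalgamation property: whenever A, B, C are such structures and i_A : C → A, i_B : C → B are order embeddings commuting with each indexed operation, there exist such a structure D and order embeddings j_A : A → D, j_B : B → D commuting with each indexed operation, such that j_A ∘ i_A = j_B ∘ i_B and range(j_A) ∩ range(j_B) = range(j_A ∘ i_A). -/
/-- A linearly ordered set equipped with an `F`-indexed family of order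
automorphisms and a `G`-indexed family of order antiautomorphisms, all having a
common center (common fixed point). -/
structure LinOrderAutAntiCenter (F G : Type) where
  carrier : Type
  [linOrd : LinearOrder carrier]
  center : carrier
  f : F → carrier → carrier
  g : G → carrier → carrier
  bijF : ∀ i, Function.Bijective (f i)
  ordF : ∀ i (a b : carrier), a ≤ b ↔ f i a ≤ f i b
  bijG : ∀ j, Function.Bijective (g j)
  ordG : ∀ j (a b : carrier), a ≤ b ↔ g j b ≤ g j a
  centerF : ∀ i, f i center = center
  centerG : ∀ j, g j center = center

attribute [instance] LinOrderAutAntiCenter.linOrd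

namespace AmalgAux

open Sum Classical

variable {F G : Type} {A B C : LinOrderAutAntiCenter F G}
variable (iA : C.carrier ↪o A.carrier) (iB : C.carrier ↪o B.carrier)

/-- `a ≤ b` witnessed through `C`. -/
def P (a : A.carrier) (b : B.carrier) : Prop := ∃ c, a ≤ iA c ∧ iB c ≤ b

/-- `b ≤ a` witnessed through `C`. -/
def Q (a : A.carrier) (b : B.carrier) : Prop := ∃ c, b ≤ iB c ∧ iA c ≤ a

/-- mixed `≤` : `a ≤ b`. -/
def ble (a : A.carrier) (b : B.carrier) : Prop :=
  P iA iB a b ∨ (¬ Q iA iB a b ∧ ¬ iA C.center ≤ a)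

/-- mixed `≤` : `b ≤ a`. -/
def bge (a : A.carrier) (b : B.carrier) : Prop :=
  Q iA iB a b ∨ (¬ P iA iB a b ∧ iA C.center ≤ a)

lemma not_P_and_Q {a b} (hb : b ∉ Set.range iB) :
    ¬ (P iA iB a b ∧ Q iA iB a b) := by
  rintro ⟨⟨c, h1, h2⟩, ⟨c', h3, h4⟩⟩
  have hcc : c' ≤ c := iA.le_iff_le.mp (h4.trans h1)
  exact hb ⟨c', le_antisymm ((iB.le_iff_le.mpr hcc).trans h2) h3⟩

lemma P_or_Q_of_mem {b} (c : C.carrier) : P iA iB (iA c) b ∨ Q iA iB (iA c) b := by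
  rcases le_total (iB c) b with h | h
  · exact Or.inl ⟨c, le_refl _, h⟩
  · exact Or.inr ⟨c, h, le_refl _⟩

lemma P_range {b} (c : C.carrier) : P iA iB (iA c) b ↔ iB c ≤ b := by
  constructor
  · rintro ⟨c', h1, h2⟩
    exact (iB.le_iff_le.mpr (iA.le_iff_le.mp h1)).trans h2
  · exact fun h => ⟨c, le_refl _, h⟩

lemma Q_range {b} (c : C.carrier) : Q iA iB (iA c) b ↔ b ≤ iB c := by
  constructor
  · rintro ⟨c', h1, h2⟩
    exact h1.trans (iB.le_iff_le.mpr (iA.le_iff_le.mp h2))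
  · exact fun h => ⟨c, h, le_refl _⟩

lemma ble_or_bge (a b) : ble iA iB a b ∨ bge iA iB a b := by
  by_cases hp : P iA iB a b
  · exact Or.inl (Or.inl hp)
  by_cases hq : Q iA iB a b
  · exact Or.inr (Or.inl hq)
  by_cases hc : iA C.center ≤ a
  · exact Or.inr (Or.inr ⟨hp, hc⟩)
  · exact Or.inl (Or.inr ⟨hq, hc⟩)

lemma not_ble_and_bge {a b} (hb : b ∉ Set.range iB) :
    ¬ (ble iA iB a b ∧ bge iA iB a b) := by
  rintro ⟨h1 | ⟨h1, h1'⟩, h2 | ⟨h2, h2'⟩⟩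
  · exact not_P_and_Q iA iB hb ⟨h1, h2⟩
  · exact h2 h1
  · exact h1 h2
  · exact h1' h2'

lemma ble_range_iff {b} (hb : b ∉ Set.range iB) (c : C.carrier) :
    ble iA iB (iA c) b ↔ iB c ≤ b := by
  constructor
  · rintro (h | ⟨hq, _⟩)
    · exact (P_range iA iB c).mp h
    · rcases P_or_Q_of_mem iA iB (b := b) c with h | h
      · exact (P_range iA iB c).mp h
      · exact absurd h hq
  · exact fun h => Or.inl ((P_range iA iB c).mpr h)

lemma bge_range_iff {b} (hb : b ∉ Set.range iB) (c : C.carrier) :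
    bge iA iB (iA c) b ↔ b ≤ iB c := by
  constructor
  · rintro (h | ⟨hp, _⟩)
    · exact (Q_range iA iB c).mp h
    · rcases P_or_Q_of_mem iA iB (b := b) c with h | h
      · exact absurd h hp
      · exact (Q_range iA iB c).mp h
  · exact fun h => Or.inl ((Q_range iA iB c).mpr h)

/- Transitivity auxiliary lemmas. -/

lemma trans_llr {a a' b} (h : a ≤ a') (h2 : ble iA iB a' b) : ble iA iB a b := by
  rcases h2 with ⟨c, h3, h4⟩ | ⟨hq, hc⟩
  · exact Or.inl ⟨c, h.trans h3, h4⟩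
  · refine Or.inr ⟨fun ⟨c, h5, h6⟩ => hq ⟨c, h5, h6.trans h⟩, fun hle => hc (hle.trans h)⟩

lemma trans_lrr {a b b'} (h : ble iA iB a b) (h2 : b ≤ b') : ble iA iB a b' := by
  rcases h with ⟨c, h3, h4⟩ | ⟨hq, hc⟩
  · exact Or.inl ⟨c, h3, h4.trans h2⟩
  · exact Or.inr ⟨fun ⟨c, h5, h6⟩ => hq ⟨c, h2.trans h5, h6⟩, hc⟩

lemma trans_rrl {a b b'} (h : b ≤ b') (h2 : bge iA iB a b') : bge iA iB a b := by
  rcases h2 with ⟨c, h3, h4⟩ | ⟨hp, hc⟩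
  · exact Or.inl ⟨c, h.trans h3, h4⟩
  · exact Or.inr ⟨fun ⟨c, h5, h6⟩ => hp ⟨c, h5, h6.trans h⟩, hc⟩

lemma trans_rll {a a' b} (h : bge iA iB a b) (h2 : a ≤ a') : bge iA iB a' b := by
  rcases h with ⟨c, h3, h4⟩ | ⟨hp, hc⟩
  · exact Or.inl ⟨c, h3, h4.trans h2⟩
  · exact Or.inr ⟨fun ⟨c, h5, h6⟩ => hp ⟨c, h2.trans h5, h6⟩, hc.trans h2⟩

lemma trans_lrl {a a' b} (h : ble iA iB a b) (h2 : bge iA iB a' b) : a ≤ a' := by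
  by_contra hlt
  replace hlt : a' < a := lt_of_not_ge hlt
  rcases h with ⟨c, h3, h4⟩ | ⟨hq, hc⟩
  · rcases h2 with ⟨c', h5, h6⟩ | ⟨hp, hc'⟩
    · -- iB c ≤ b ≤ iB c', so c ≤ c', so a ≤ iA c ≤ iA c' ≤ a', contradiction
      have hcc : c ≤ c' := iB.le_iff_le.mp (h4.trans h5)
      exact absurd (h3.trans ((iA.le_iff_le.mpr hcc).trans h6)) (not_le.mpr hlt)
    · exact hp ⟨c, hlt.le.trans h3, h4⟩
  · rcases h2 with ⟨c', h5, h6⟩ | ⟨hp, hc'⟩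
    · exact hq ⟨c', h5, h6.trans hlt.le⟩
    · exact hc (hc'.trans hlt.le)

lemma trans_rlr {a b b'} (h : bge iA iB a b) (h2 : ble iA iB a b') : b ≤ b' := by
  by_contra hlt
  replace hlt : b' < b := lt_of_not_ge hlt
  rcases h with ⟨c, h3, h4⟩ | ⟨hp, hc⟩
  · rcases h2 with ⟨c', h5, h6⟩ | ⟨hq, hc'⟩
    · have hcc : c ≤ c' := iA.le_iff_le.mp (h4.trans h5)
      exact absurd (h3.trans ((iB.le_iff_le.mpr hcc).trans h6)) (not_le.mpr hlt)
    · exact hq ⟨c, hlt.le.trans h3, h4⟩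
  · rcases h2 with ⟨c', h5, h6⟩ | ⟨hq, hc'⟩
    · exact hp ⟨c', h5, h6.trans hlt.le⟩
    · exact hc' hc

/- Invariance under the automorphisms. -/

section ops
variable (hAf : ∀ i c, iA (C.f i c) = A.f i (iA c))
variable (hAg : ∀ j c, iA (C.g j c) = A.g j (iA c))
variable (hBf : ∀ i c, iB (C.f i c) = B.f i (iB c))
variable (hBg : ∀ j c, iB (C.g j c) = B.g j (iB c))

include hBf in
lemma f_closure {b} (hb : b ∉ Set.range iB) (i : F) : B.f i b ∉ Set.range iB := by
  rintro ⟨c, hc⟩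
  obtain ⟨c', rfl⟩ := (C.bijF i).2 c
  exact hb ⟨c', (B.bijF i).1 (by rw [← hBf, hc])⟩

include hBg in
lemma g_closure {b} (hb : b ∉ Set.range iB) (j : G) : B.g j b ∉ Set.range iB := by
  rintro ⟨c, hc⟩
  obtain ⟨c', rfl⟩ := (C.bijG j).2 c
  exact hb ⟨c', (B.bijG j).1 (by rw [← hBg, hc])⟩

include hAf hBf in
lemma P_f_iff (i a b) : P iA iB (A.f i a) (B.f i b) ↔ P iA iB a b := by
  constructor
  · rintro ⟨c, h1, h2⟩
    obtain ⟨c', rfl⟩ := (C.bijF i).2 c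
    rw [hAf] at h1; rw [hBf] at h2
    exact ⟨c', (A.ordF i a (iA c')).mpr h1, (B.ordF i (iB c') b).mpr h2⟩
  · rintro ⟨c, h1, h2⟩
    exact ⟨C.f i c, by rw [hAf]; exact (A.ordF i a (iA c)).mp h1,
      by rw [hBf]; exact (B.ordF i (iB c) b).mp h2⟩

include hAf hBf in
lemma Q_f_iff (i a b) : Q iA iB (A.f i a) (B.f i b) ↔ Q iA iB a b := by
  constructor
  · rintro ⟨c, h1, h2⟩
    obtain ⟨c', rfl⟩ := (C.bijF i).2 c
    rw [hBf] at h1; rw [hAf] at h2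
    exact ⟨c', (B.ordF i b (iB c')).mpr h1, (A.ordF i (iA c') a).mpr h2⟩
  · rintro ⟨c, h1, h2⟩
    exact ⟨C.f i c, by rw [hBf]; exact (B.ordF i b (iB c)).mp h1,
      by rw [hAf]; exact (A.ordF i (iA c) a).mp h2⟩

include hAf in
lemma cen_f_iff (i a) : iA C.center ≤ A.f i a ↔ iA C.center ≤ a := by
  have h : iA C.center = A.f i (iA C.center) := by rw [← hAf, C.centerF]
  conv_lhs => rw [h]
  exact (A.ordF i (iA C.center) a).symm

include hAf hBf in
lemma ble_f_iff (i a b) : ble iA iB (A.f i a) (B.f i b) ↔ ble iA iB a b := by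
  unfold ble
  rw [P_f_iff iA iB hAf hBf, Q_f_iff iA iB hAf hBf, cen_f_iff iA hAf]

include hAf hBf in
lemma bge_f_iff (i a b) : bge iA iB (A.f i a) (B.f i b) ↔ bge iA iB a b := by
  unfold bge
  rw [P_f_iff iA iB hAf hBf, Q_f_iff iA iB hAf hBf, cen_f_iff iA hAf]

include hAg hBg in
lemma P_g_iff (j a b) : Q iA iB (A.g j a) (B.g j b) ↔ P iA iB a b := by
  constructor
  · rintro ⟨c, h1, h2⟩
    obtain ⟨c', rfl⟩ := (C.bijG j).2 c
    rw [hBg] at h1; rw [hAg] at h2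
    exact ⟨c', (A.ordG j a (iA c')).mpr h2, (B.ordG j (iB c') b).mpr h1⟩
  · rintro ⟨c, h1, h2⟩
    exact ⟨C.g j c, by rw [hBg]; exact (B.ordG j (iB c) b).mp h2,
      by rw [hAg]; exact (A.ordG j a (iA c)).mp h1⟩

include hAg hBg in
lemma Q_g_iff (j a b) : P iA iB (A.g j a) (B.g j b) ↔ Q iA iB a b := by
  constructor
  · rintro ⟨c, h1, h2⟩
    obtain ⟨c', rfl⟩ := (C.bijG j).2 c
    rw [hAg] at h1; rw [hBg] at h2
    exact ⟨c', (B.ordG j b (iB c')).mpr h2, (A.ordG j (iA c') a).mpr h1⟩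
  · rintro ⟨c, h1, h2⟩
    exact ⟨C.g j c, by rw [hAg]; exact (A.ordG j (iA c) a).mp h2,
      by rw [hBg]; exact (B.ordG j b (iB c)).mp h1⟩

include hAg in
lemma cen_g_iff (j a) : iA C.center ≤ A.g j a ↔ a ≤ iA C.center := by
  have h : iA C.center = A.g j (iA C.center) := by rw [← hAg, C.centerG]
  conv_lhs => rw [h]
  exact (A.ordG j a (iA C.center)).symm

include hAg hBg in
lemma ble_g_iff {b} (hb : b ∉ Set.range iB) (j : G) (a : A.carrier) :
    bge iA iB (A.g j a) (B.g j b) ↔ ble iA iB a b := by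
  unfold bge ble
  rw [P_g_iff iA iB hAg hBg, Q_g_iff iA iB hAg hBg, cen_g_iff iA hAg]
  constructor
  · rintro (h | ⟨hq, hc⟩)
    · exact Or.inl h
    · rcases lt_or_eq_of_le hc with h' | h'
      · exact Or.inr ⟨hq, not_le.mpr h'⟩
      · subst h'
        rcases P_or_Q_of_mem iA iB (b := b) C.center with h | h
        · exact Or.inl h
        · exact absurd h hq
  · rintro (h | ⟨hq, hc⟩)
    · exact Or.inl h
    · exact Or.inr ⟨hq, (not_le.mp hc).le⟩

include hAg hBg in
lemma bge_g_iff {b} (hb : b ∉ Set.range iB) (j : G) (a : A.carrier) :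
    ble iA iB (A.g j a) (B.g j b) ↔ bge iA iB a b := by
  unfold bge ble
  rw [P_g_iff iA iB hAg hBg, Q_g_iff iA iB hAg hBg, cen_g_iff iA hAg]
  rw [not_le]
  constructor
  · rintro (h | ⟨hp, hc⟩)
    · exact Or.inl h
    · exact Or.inr ⟨hp, hc.le⟩
  · rintro (h | ⟨hp, hc⟩)
    · exact Or.inl h
    · rcases lt_or_eq_of_le hc with h' | h'
      · exact Or.inr ⟨hp, h'⟩
      · rcases P_or_Q_of_mem iA iB (b := b) C.center with h2 | h2
        · rw [h'] at h2; exact absurd h2 hp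
        · rw [h'] at h2; exact Or.inl h2

end ops


/- The amalgam. -/

/-- Carrier of the amalgam: a type synonym to avoid `Sum` order instances. -/
def Dcar (A : LinOrderAutAntiCenter F G) (iB : C.carrier ↪o B.carrier) : Type :=
  A.carrier ⊕ {b : B.carrier // b ∉ Set.range iB}

def dle : Dcar A iB → Dcar A iB → Prop
  | inl a, inl a' => a ≤ a'
  | inl a, inr b => ble iA iB a b.1
  | inr b, inl a => bge iA iB a b.1
  | inr b, inr b' => b.1 ≤ b'.1

noncomputable def dLO : LinearOrder (Dcar A iB) where
  le := dle iA iB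
  lt := fun x y => dle iA iB x y ∧ ¬ dle iA iB y x
  lt_iff_le_not_ge := fun _ _ => Iff.rfl
  le_refl := by rintro (a | b) <;> simp [dle]
  le_trans := by
    rintro (a | b) (a' | b') (a'' | b'') h1 h2
    · exact le_trans h1 h2
    · exact trans_llr iA iB h1 h2
    · exact trans_lrl iA iB h1 h2
    · exact trans_lrr iA iB h1 h2
    · exact trans_rll iA iB h1 h2
    · exact trans_rlr iA iB h1 h2
    · exact trans_rrl iA iB h1 h2
    · exact le_trans h1 h2
  le_antisymm := by
    rintro (a | b) (a' | b') h1 h2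
    · exact congrArg inl (le_antisymm h1 h2)
    · exact absurd ⟨h1, h2⟩ (not_ble_and_bge iA iB b'.2)
    · exact absurd ⟨h2, h1⟩ (not_ble_and_bge iA iB b.2)
    · exact congrArg inr (Subtype.ext (le_antisymm h1 h2))
  le_total := by
    rintro (a | b) (a' | b')
    · exact le_total a a'
    · exact ble_or_bge iA iB a b'.1
    · exact (ble_or_bge iA iB a' b.1).symm
    · exact le_total b.1 b'.1
  toDecidableLE := fun _ _ => Classical.dec _

section ops2
variable (hAf : ∀ i c, iA (C.f i c) = A.f i (iA c))
variable (hAg : ∀ j c, iA (C.g j c) = A.g j (iA c))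
variable (hBf : ∀ i c, iB (C.f i c) = B.f i (iB c))
variable (hBg : ∀ j c, iB (C.g j c) = B.g j (iB c))

def Df (i : F) : Dcar A iB → Dcar A iB
  | inl a => inl (A.f i a)
  | inr b => inr ⟨B.f i b.1, f_closure iB hBf b.2 i⟩

def Dg (j : G) : Dcar A iB → Dcar A iB
  | inl a => inl (A.g j a)
  | inr b => inr ⟨B.g j b.1, g_closure iB hBg b.2 j⟩

/-- The amalgam. -/
noncomputable def DD : LinOrderAutAntiCenter F G where
  carrier := Dcar A iB
  linOrd := dLO iA iB
  center := inl A.center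
  f := Df iB hBf
  g := Dg iB hBg
  bijF := by
    intro i
    constructor
    · rintro (a | b) (a' | b') h
      · exact congrArg inl ((A.bijF i).1 (Sum.inl_injective h))
      · exact absurd h (by simp [Df])
      · exact absurd h (by simp [Df])
      · exact congrArg inr (Subtype.ext ((B.bijF i).1
          (congrArg Subtype.val (Sum.inr_injective h))))
    · rintro (a | b)
      · obtain ⟨a', rfl⟩ := (A.bijF i).2 a
        exact ⟨inl a', rfl⟩
      · obtain ⟨b', hb'⟩ := (B.bijF i).2 b.1
        have hb'mem : b' ∉ Set.range iB := by
          rintro ⟨c, rfl⟩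
          exact b.2 ⟨C.f i c, by rw [hBf, hb']⟩
        refine ⟨inr ⟨b', hb'mem⟩, ?_⟩
        simp only [Df]
        exact congrArg inr (Subtype.ext hb')
  ordF := by
    rintro i (a | b) (a' | b')
    · exact A.ordF i a a'
    · exact (ble_f_iff iA iB hAf hBf i a b'.1).symm
    · exact (bge_f_iff iA iB hAf hBf i a' b.1).symm
    · exact B.ordF i b.1 b'.1
  bijG := by
    intro j
    constructor
    · rintro (a | b) (a' | b') h
      · exact congrArg inl ((A.bijG j).1 (Sum.inl_injective h))
      · exact absurd h (by simp [Dg])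
      · exact absurd h (by simp [Dg])
      · exact congrArg inr (Subtype.ext ((B.bijG j).1
          (congrArg Subtype.val (Sum.inr_injective h))))
    · rintro (a | b)
      · obtain ⟨a', rfl⟩ := (A.bijG j).2 a
        exact ⟨inl a', rfl⟩
      · obtain ⟨b', hb'⟩ := (B.bijG j).2 b.1
        have hb'mem : b' ∉ Set.range iB := by
          rintro ⟨c, rfl⟩
          exact b.2 ⟨C.g j c, by rw [hBg, hb']⟩
        refine ⟨inr ⟨b', hb'mem⟩, ?_⟩
        simp only [Dg]
        exact congrArg inr (Subtype.ext hb')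
  ordG := by
    rintro j (a | b) (a' | b')
    · exact A.ordG j a a'
    · exact (ble_g_iff iA iB hAg hBg b'.2 j a).symm
    · exact (bge_g_iff iA iB hAg hBg b.2 j a').symm
    · exact B.ordG j b.1 b'.1
  centerF := fun i => congrArg inl (A.centerF i)
  centerG := fun j => congrArg inl (A.centerG j)

/-- The embedding of `A` into the amalgam. -/
noncomputable def jAe :
    A.carrier ↪o (DD iA iB hAf hAg hBf hBg).carrier :=
  OrderEmbedding.ofMapLEIff (fun a => (inl a : Dcar A iB)) (fun a a' => Iff.rfl)

/-- The underlying map of the embedding of `B` into the amalgam. -/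
noncomputable def jBfun (b : B.carrier) : Dcar A iB :=
  if h : b ∈ Set.range iB then inl (iA h.choose) else inr ⟨b, h⟩

lemma jBfun_mem (c : C.carrier) : jBfun iA iB (iB c) = (inl (iA c) : Dcar A iB) := by
  have h : (iB c) ∈ Set.range iB := ⟨c, rfl⟩
  simp only [jBfun, dif_pos h]
  exact (dif_pos h).trans (congrArg inl (congrArg iA (iB.injective h.choose_spec)))

lemma jBfun_not {b : B.carrier} (hb : b ∉ Set.range iB) :
    jBfun iA iB b = (inr ⟨b, hb⟩ : Dcar A iB) := dif_neg hb

/-- The embedding of `B` into the amalgam. -/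
noncomputable def jBe :
    B.carrier ↪o (DD iA iB hAf hAg hBf hBg).carrier := by
  refine OrderEmbedding.ofMapLEIff (jBfun iA iB) ?_
  intro b b'
  show dle iA iB _ _ ↔ _
  by_cases hb : b ∈ Set.range iB
  · obtain ⟨c, rfl⟩ := hb
    by_cases hb' : b' ∈ Set.range iB
    · obtain ⟨c', rfl⟩ := hb'
      rw [jBfun_mem, jBfun_mem]
      show iA c ≤ iA c' ↔ _
      rw [iA.le_iff_le, iB.le_iff_le]
    · rw [jBfun_mem, jBfun_not iA iB hb']
      exact ble_range_iff iA iB hb' c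
  · by_cases hb' : b' ∈ Set.range iB
    · obtain ⟨c, rfl⟩ := hb'
      rw [jBfun_not iA iB hb, jBfun_mem]
      exact bge_range_iff iA iB hb c
    · rw [jBfun_not iA iB hb, jBfun_not iA iB hb']
      exact Iff.rfl

end ops2

end AmalgAux

open AmalgAux Sum in
/-- For every pair of sets `F` and `G`, the class of linearly ordered sets with
an `F`-indexed family of automorphisms and a `G`-indexed family of
antiautomorphisms, all with a common center, has the strong amalgamation
property. -/
theorem linear_orders_auts_antiauts_common_center_strong_amalgamation
    (F G : Type) (A B C : LinOrderAutAntiCenter F G)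
    (iA : C.carrier ↪o A.carrier) (iB : C.carrier ↪o B.carrier)
    (hAf : ∀ i c, iA (C.f i c) = A.f i (iA c))
    (hAg : ∀ j c, iA (C.g j c) = A.g j (iA c))
    (hBf : ∀ i c, iB (C.f i c) = B.f i (iB c))
    (hBg : ∀ j c, iB (C.g j c) = B.g j (iB c)) :
    ∃ (D : LinOrderAutAntiCenter F G) (jA : A.carrier ↪o D.carrier)
      (jB : B.carrier ↪o D.carrier),
      (∀ i a, jA (A.f i a) = D.f i (jA a)) ∧
      (∀ j a, jA (A.g j a) = D.g j (jA a)) ∧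
      (∀ i b, jB (B.f i b) = D.f i (jB b)) ∧
      (∀ j b, jB (B.g j b) = D.g j (jB b)) ∧
      (∀ c, jA (iA c) = jB (iB c)) ∧
      Set.range jA ∩ Set.range jB = Set.range (fun c => jA (iA c)) := by
  classical
  refine ⟨DD iA iB hAf hAg hBf hBg, jAe iA iB hAf hAg hBf hBg,
    jBe iA iB hAf hAg hBf hBg, fun i a => rfl, fun j a => rfl, ?_, ?_, ?_, ?_⟩
  · -- jB commutes with f
    intro i b
    show jBfun iA iB (B.f i b) = Df iB hBf i (jBfun iA iB b)
    by_cases hb : b ∈ Set.range iB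
    · obtain ⟨c, rfl⟩ := hb
      rw [jBfun_mem, ← hBf, jBfun_mem, hAf]
      rfl
    · rw [jBfun_not iA iB hb, jBfun_not iA iB (f_closure iB hBf hb i)]
      rfl
  · -- jB commutes with g
    intro j b
    show jBfun iA iB (B.g j b) = Dg iB hBg j (jBfun iA iB b)
    by_cases hb : b ∈ Set.range iB
    · obtain ⟨c, rfl⟩ := hb
      rw [jBfun_mem, ← hBg, jBfun_mem, hAg]
      rfl
    · rw [jBfun_not iA iB hb, jBfun_not iA iB (g_closure iB hBg hb j)]
      rfl
  · -- common triangle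
    intro c
    show (inl (iA c) : Dcar A iB) = jBfun iA iB (iB c)
    rw [jBfun_mem]
  · -- strong amalgamation: ranges
    ext x
    constructor
    · rintro ⟨⟨a, rfl⟩, ⟨b, hb⟩⟩
      by_cases hbm : b ∈ Set.range iB
      · obtain ⟨c, rfl⟩ := hbm
        have h2 : jBe iA iB hAf hAg hBf hBg (iB c) = (inl (iA c) : Dcar A iB) :=
          jBfun_mem iA iB c
        exact ⟨c, h2.symm.trans hb⟩
      · exfalso
        have h2 : jBe iA iB hAf hAg hBf hBg b = (inr ⟨b, hbm⟩ : Dcar A iB) :=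
          jBfun_not iA iB hbm
        rw [h2] at hb
        exact Sum.inr_ne_inl hb
    · rintro ⟨c, rfl⟩
      refine ⟨⟨iA c, rfl⟩, ⟨iB c, ?_⟩⟩
      show jBfun iA iB (iB c) = _
      rw [jBfun_mem]
      rfl
end

section
/- In the class of linearly ordered sets with one order reversing (antitone) unary operation, a structure C is a strong amalgamation base if and only if the operation g_C has a fixed point (a center). In particular, the class of linearly ordered sets with an order reversing unary operation having a center has the strong amalgamation property: whenever A, B, C are linearly ordered sets with antitone unary operations, g_C has a fixed point, and i_A : C → A, i_B : C → B are order embeddings commuting with the operations, there exist a linearly ordered set D with an antitone unary operation and order embeddings j_A : A → D, j_B : B → D commuting with the operations, with j_A ∘ i_A = j_B ∘ i_B and range(j_A) ∩ range(j_B) = range(j_A ∘ i_A). -/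
/-- A linearly ordered set equipped with one order reversing (antitone) unary
operation. -/
structure LinOrderAnti where
  carrier : Type
  [linOrd : LinearOrder carrier]
  g : carrier → carrier
  anti : Antitone g

attribute [instance] LinOrderAnti.linOrd

namespace StrongAmalgAux

theorem fix_unique (D : LinOrderAnti) {x y : D.carrier} (hx : D.g x = x)
    (hy : D.g y = y) : x = y := by
  rcases lt_trichotomy x y with h | h | h
  · have := D.anti h.le
    rw [hx, hy] at this
    exact absurd this (not_le_of_gt h)
  · exact h
  · have := D.anti h.le
    rw [hx, hy] at this
    exact absurd this (not_le_of_gt h)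

section Forward

variable (C : LinOrderAnti)

def optR : Option C.carrier → Option C.carrier → Prop
  | .some c, .some d => c < d
  | .some c, .none => c < C.g c
  | .none, .some c => C.g c < c
  | .none, .none => False

theorem optR_sto (hno : ∀ c, C.g c ≠ c) : IsStrictTotalOrder (Option C.carrier) (optR C) where
  trichotomous := by
    intro x y
    refine fun h1 h2 => (?_ : optR C x y ∨ x = y ∨ optR C y x).elim (fun h => absurd h h1) (fun h => h.elim id (fun h => absurd h h2))
    match x, y with
    | .some c, .some d =>
      rcases lt_trichotomy c d with h | h | h
      · exact Or.inl h
      · exact Or.inr (Or.inl (by rw [h]))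
      · exact Or.inr (Or.inr h)
    | .some c, .none =>
      rcases lt_or_gt_of_ne (hno c).symm with h | h
      · exact Or.inl h
      · exact Or.inr (Or.inr h)
    | .none, .some c =>
      rcases lt_or_gt_of_ne (hno c).symm with h | h
      · exact Or.inr (Or.inr h)
      · exact Or.inl h
    | .none, .none => exact Or.inr (Or.inl rfl)
  irrefl := by
    intro x
    match x with
    | .some c => exact lt_irrefl c
    | .none => exact id
  trans := by
    intro x y z hxy hyz
    match x, y, z, hxy, hyz with
    | .some c, .some d, .some e, hxy, hyz => exact lt_trans hxy hyz
    | .some c, .some d, .none, hxy, hyz =>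
      show c < C.g c
      calc c < d := hxy
        _ < C.g d := hyz
        _ ≤ C.g c := C.anti hxy.le
    | .some c, .none, .some d, hxy, hyz =>
      show c < d
      by_contra h
      push_neg at h
      have h1 : C.g c ≤ C.g d := C.anti h
      have : c < d := lt_of_lt_of_le hxy (h1.trans hyz.le)
      exact absurd this (not_lt_of_ge h)
    | .none, .some c, .some d, hxy, hyz =>
      show C.g d < d
      calc C.g d ≤ C.g c := C.anti hyz.le
        _ < c := hxy
        _ < d := hyz
    | .none, .some c, .none, hxy, hyz =>
      exact absurd (lt_trans hxy hyz) (lt_irrefl _)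
    | .some c, .none, .none, _, hyz => exact hyz.elim
    | .none, .none, _, hxy, _ => exact hxy.elim

/-- The extension of `C` by a new center. -/
noncomputable def ext (hno : ∀ c, C.g c ≠ c) : LinOrderAnti := by
  haveI := optR_sto C hno
  haveI : DecidableRel (optR C) := Classical.decRel _
  exact
  { carrier := Option C.carrier
    linOrd := linearOrderOfSTO (optR C)
    g := fun x => Option.map C.g x
    anti := by
      intro x y hxy
      have hxy' : x = y ∨ optR C x y := hxy
      show Option.map C.g y = Option.map C.g x ∨ optR C (Option.map C.g y) (Option.map C.g x)
      rcases hxy' with rfl | h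
      · exact Or.inl rfl
      · match x, y, h with
        | .some c, .some d, h =>
          rcases (C.anti h.le).lt_or_eq with h' | h'
          · exact Or.inr h'
          · exact Or.inl (show Option.some (C.g d) = Option.some (C.g c) by rw [h'])
        | .some c, .none, h =>
          refine Or.inr ?_
          show C.g (C.g c) < C.g c
          rcases (C.anti h.le).lt_or_eq with h' | h'
          · exact h'
          · exact absurd h' (hno (C.g c))
        | .none, .some c, h =>
          refine Or.inr ?_
          show C.g c < C.g (C.g c)
          rcases (C.anti h.le).lt_or_eq with h' | h'
          · exact h'
          · exact absurd h'.symm (hno (C.g c)) }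

theorem ext_carrier (hno : ∀ c, C.g c ≠ c) : (ext C hno).carrier = Option C.carrier := rfl

theorem ext_lt_iff (hno : ∀ c, C.g c ≠ c) {x y : (ext C hno).carrier} : x < y ↔ optR C x y := Iff.rfl

/-- The embedding of `C` into its extension. -/
noncomputable def extEmb (hno : ∀ c, C.g c ≠ c) : C.carrier ↪o (ext C hno).carrier :=
  OrderEmbedding.ofStrictMono (fun c => (.some c : (ext C hno).carrier))
    (fun c d h => (ext_lt_iff C hno).2 h)

theorem extEmb_comm (hno : ∀ c, C.g c ≠ c) (c : C.carrier) :
    extEmb C hno (C.g c) = (ext C hno).g (extEmb C hno c) := rfl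

theorem ext_g_none (hno : ∀ c, C.g c ≠ c) : (ext C hno).g (.none : (StrongAmalgAux.ext C hno).carrier) = .none := rfl

end Forward

end StrongAmalgAux
/-! ### Backward direction: the amalgamation construction -/

structure Ctx where
  C : LinOrderAnti
  A : LinOrderAnti
  B : LinOrderAnti
  iA : C.carrier ↪o A.carrier
  iB : C.carrier ↪o B.carrier
  hA : ∀ c, iA (C.g c) = A.g (iA c)
  hB : ∀ c, iB (C.g c) = B.g (iB c)
  c0 : C.carrier
  hc0 : C.g c0 = c0

namespace Ctx

variable {X : Ctx}

/-- The disjoint union of the carriers of `A` and `B`. -/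
abbrev S (X : Ctx) : Type := X.A.carrier ⊕ X.B.carrier

/-- The lower cut in `C` determined by an element. -/
def posL (X : Ctx) : X.S → Set X.C.carrier
  | .inl a => {c | X.iA c < a}
  | .inr b => {c | X.iB c < b}

/-- Whether the element lies in the image of `C`. -/
def posF (X : Ctx) : X.S → Prop
  | .inl a => a ∈ Set.range ⇑X.iA
  | .inr b => b ∈ Set.range ⇑X.iB

/-- Strict comparison of positions relative to `C`. -/
def pLT (X : Ctx) (x y : X.S) : Prop :=
  X.posL x ⊂ X.posL y ∨ (X.posL x = X.posL y ∧ ¬ X.posF x ∧ X.posF y)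

/-- Equality of positions relative to `C`. -/
def pEQ (X : Ctx) (x y : X.S) : Prop :=
  X.posL x = X.posL y ∧ (X.posF x ↔ X.posF y)

def pLE (X : Ctx) (x y : X.S) : Prop := X.pLT x y ∨ X.pEQ x y

/-- `x` is the canonical copy of the point `c` of `C`. -/
def canon (X : Ctx) (c : X.C.carrier) (x : X.S) : Prop :=
  x = .inl (X.iA c) ∨ x = .inr (X.iB c)

theorem posL_initial {x : X.S} {c c' : X.C.carrier} (h : c' ≤ c)
    (hc : c ∈ X.posL x) : c' ∈ X.posL x := by
  cases x with
  | inl a => exact lt_of_le_of_lt (X.iA.monotone h) hc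
  | inr b => exact lt_of_le_of_lt (X.iB.monotone h) hc

theorem posL_total (x y : X.S) : X.posL x ⊆ X.posL y ∨ X.posL y ⊆ X.posL x := by
  by_contra hc
  push_neg at hc
  obtain ⟨h1, h2⟩ := hc
  obtain ⟨c, hc1, hc2⟩ := Set.not_subset.1 h1
  obtain ⟨d, hd1, hd2⟩ := Set.not_subset.1 h2
  rcases le_total c d with h | h
  · exact hc2 (posL_initial h hd1)
  · exact hd2 (posL_initial h hc1)

@[refl] theorem pEQ_refl (x : X.S) : X.pEQ x x := ⟨rfl, Iff.rfl⟩

theorem pEQ_symm {x y : X.S} (h : X.pEQ x y) : X.pEQ y x := ⟨h.1.symm, h.2.symm⟩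

theorem pEQ_trans {x y z : X.S} (h : X.pEQ x y) (h' : X.pEQ y z) : X.pEQ x z :=
  ⟨h.1.trans h'.1, h.2.trans h'.2⟩

theorem pEQ_not_pLT {x y : X.S} (h : X.pEQ x y) : ¬ X.pLT x y := by
  rintro (hss | ⟨-, hF1, hF2⟩)
  · exact hss.ne h.1
  · exact hF1 (h.2.2 hF2)

theorem pLT_asymm {x y : X.S} (h : X.pLT x y) (h' : X.pLT y x) : False := by
  rcases h with hss | ⟨he, hF1, hF2⟩
  · rcases h' with hss' | ⟨he', -, -⟩
    · exact (hss.trans hss').ne rfl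
    · exact hss.ne he'.symm
  · rcases h' with hss' | ⟨-, hF1', -⟩
    · exact hss'.ne he.symm
    · exact hF1' hF2

theorem pLT_trans {x y z : X.S} (h : X.pLT x y) (h' : X.pLT y z) : X.pLT x z := by
  rcases h with hss | ⟨he, hF1, hF2⟩
  · rcases h' with hss' | ⟨he', -, -⟩
    · exact Or.inl (hss.trans hss')
    · exact Or.inl (he' ▸ hss)
  · rcases h' with hss' | ⟨he', -, hF2'⟩
    · exact Or.inl (he ▸ hss')
    · exact Or.inr ⟨he.trans he', hF1, hF2'⟩

theorem pLT_congr_left {x x' y : X.S} (he : X.pEQ x x') (h : X.pLT x y) : X.pLT x' y := by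
  rcases h with hss | ⟨heq, hF1, hF2⟩
  · exact Or.inl (he.1 ▸ hss)
  · exact Or.inr ⟨he.1 ▸ heq, fun hF => hF1 (he.2.2 hF), hF2⟩

theorem pLT_congr_right {x y y' : X.S} (he : X.pEQ y y') (h : X.pLT x y) : X.pLT x y' := by
  rcases h with hss | ⟨heq, hF1, hF2⟩
  · exact Or.inl (he.1 ▸ hss)
  · exact Or.inr ⟨heq.trans he.1, hF1, he.2.1 hF2⟩

theorem pTot (x y : X.S) : X.pLT x y ∨ X.pEQ x y ∨ X.pLT y x := by
  rcases posL_total x y with h | h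
  · rcases h.ssubset_or_eq with hss | heq
    · exact Or.inl (Or.inl hss)
    · by_cases hFx : X.posF x <;> by_cases hFy : X.posF y
      · exact Or.inr (Or.inl ⟨heq, iff_of_true hFx hFy⟩)
      · exact Or.inr (Or.inr (Or.inr ⟨heq.symm, hFy, hFx⟩))
      · exact Or.inl (Or.inr ⟨heq, hFx, hFy⟩)
      · exact Or.inr (Or.inl ⟨heq, iff_of_false hFx hFy⟩)
  · rcases h.ssubset_or_eq with hss | heq
    · exact Or.inr (Or.inr (Or.inl hss))
    · by_cases hFx : X.posF x <;> by_cases hFy : X.posF y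
      · exact Or.inr (Or.inl ⟨heq.symm, iff_of_true hFx hFy⟩)
      · exact Or.inr (Or.inr (Or.inr ⟨heq, hFy, hFx⟩))
      · exact Or.inl (Or.inr ⟨heq.symm, hFx, hFy⟩)
      · exact Or.inr (Or.inl ⟨heq.symm, iff_of_false hFx hFy⟩)

theorem pLE_congr_left {x x' y : X.S} (he : X.pEQ x x') (h : X.pLE x y) : X.pLE x' y :=
  h.imp (pLT_congr_left he) (fun h' => pEQ_trans (pEQ_symm he) h')

theorem pLE_congr_right {x y y' : X.S} (he : X.pEQ y y') (h : X.pLE x y) : X.pLE x y' :=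
  h.imp (pLT_congr_right he) (fun h' => pEQ_trans h' he)

theorem pLE_trans {x y z : X.S} (h : X.pLE x y) (h' : X.pLE y z) : X.pLE x z := by
  rcases h with h | h <;> rcases h' with h' | h'
  · exact Or.inl (pLT_trans h h')
  · exact Or.inl (pLT_congr_right h' h)
  · exact Or.inl (pLT_congr_left (pEQ_symm h) h')
  · exact Or.inr (pEQ_trans h h')

theorem pLE_antisymm {x y : X.S} (h : X.pLE x y) (h' : X.pLE y x) : X.pEQ x y := by
  rcases h with h | h
  · rcases h' with h' | h'
    · exact absurd h' (fun hh => pLT_asymm h hh)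
    · exact absurd h (pEQ_not_pLT (pEQ_symm h'))
  · exact h

theorem pLE_not_pLT {x y : X.S} (h : X.pLE x y) : ¬ X.pLT y x := by
  rcases h with h | h
  · exact fun h' => pLT_asymm h h'
  · exact pEQ_not_pLT (pEQ_symm h)

theorem posL_ptA (c : X.C.carrier) : X.posL (.inl (X.iA c)) = Set.Iio c := by
  ext d
  exact X.iA.lt_iff_lt

theorem posL_ptB (c : X.C.carrier) : X.posL (.inr (X.iB c)) = Set.Iio c := by
  ext d
  exact X.iB.lt_iff_lt

theorem Iio_inj {α : Type*} [LinearOrder α] {c d : α} (h : Set.Iio c = Set.Iio d) :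
    c = d := by
  by_contra hne
  rcases lt_or_gt_of_ne hne with hlt | hlt
  · have : c ∈ Set.Iio d := hlt
    rw [← h] at this
    exact lt_irrefl c this
  · have : d ∈ Set.Iio c := hlt
    rw [h] at this
    exact lt_irrefl d this

theorem pEQ_pt (c : X.C.carrier) : X.pEQ (.inl (X.iA c)) (.inr (X.iB c)) :=
  ⟨by rw [posL_ptA, posL_ptB],
   iff_of_true ⟨c, rfl⟩ ⟨c, rfl⟩⟩

theorem canon_posL {c : X.C.carrier} {x : X.S} (h : X.canon c x) :
    X.posL x = Set.Iio c := by
  rcases h with rfl | rfl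
  · exact posL_ptA c
  · exact posL_ptB c

theorem canon_posF {c : X.C.carrier} {x : X.S} (h : X.canon c x) : X.posF x := by
  rcases h with rfl | rfl
  · exact ⟨c, rfl⟩
  · exact ⟨c, rfl⟩

theorem canon_pEQ {c : X.C.carrier} {x y : X.S} (hx : X.canon c x) (hy : X.canon c y) :
    X.pEQ x y :=
  ⟨(canon_posL hx).trans (canon_posL hy).symm,
   iff_of_true (canon_posF hx) (canon_posF hy)⟩

theorem pEQ_canon {c : X.C.carrier} {x y : X.S} (hy : X.canon c y) (h : X.pEQ x y) :
    X.canon c x := by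
  have hL : X.posL x = Set.Iio c := h.1.trans (canon_posL hy)
  have hF : X.posF x := h.2.2 (canon_posF hy)
  cases x with
  | inl a =>
    obtain ⟨d, hd⟩ := hF
    have : Set.Iio d = Set.Iio c := by rw [← posL_ptA (X := X) d, hd]; exact hL
    exact Or.inl (by rw [← hd, Iio_inj this])
  | inr b =>
    obtain ⟨d, hd⟩ := hF
    have : Set.Iio d = Set.Iio c := by rw [← posL_ptB (X := X) d, hd]; exact hL
    exact Or.inr (by rw [← hd, Iio_inj this])

/-! point comparison lemmas -/

theorem leA_pt {a : X.A.carrier} {c : X.C.carrier} (h : a ≤ X.iA c) :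
    X.pLE (.inl a) (.inl (X.iA c)) := by
  have hsub : X.posL (.inl a) ⊆ X.posL (.inl (X.iA c)) := by
    rw [posL_ptA]
    intro d hd
    exact X.iA.lt_iff_lt.1 (lt_of_lt_of_le hd h)
  rcases hsub.ssubset_or_eq with hss | heq
  · exact Or.inl (Or.inl hss)
  · by_cases hF : X.posF (.inl a)
    · exact Or.inr ⟨heq, iff_of_true hF ⟨c, rfl⟩⟩
    · exact Or.inl (Or.inr ⟨heq, hF, ⟨c, rfl⟩⟩)

theorem leB_pt {b : X.B.carrier} {c : X.C.carrier} (h : b ≤ X.iB c) :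
    X.pLE (.inr b) (.inr (X.iB c)) := by
  have hsub : X.posL (.inr b) ⊆ X.posL (.inr (X.iB c)) := by
    rw [posL_ptB]
    intro d hd
    exact X.iB.lt_iff_lt.1 (lt_of_lt_of_le hd h)
  rcases hsub.ssubset_or_eq with hss | heq
  · exact Or.inl (Or.inl hss)
  · by_cases hF : X.posF (.inr b)
    · exact Or.inr ⟨heq, iff_of_true hF ⟨c, rfl⟩⟩
    · exact Or.inl (Or.inr ⟨heq, hF, ⟨c, rfl⟩⟩)

theorem pt_leA {a : X.A.carrier} {c : X.C.carrier} (h : X.iA c ≤ a) :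
    X.pLE (.inl (X.iA c)) (.inl a) := by
  rcases h.lt_or_eq with hlt | heq
  · refine Or.inl (Or.inl ?_)
    constructor
    · rw [posL_ptA]
      intro d hd
      exact lt_trans (X.iA.lt_iff_lt.2 hd) hlt
    · intro hsub
      have : c ∈ X.posL (.inl (X.iA c)) := hsub hlt
      rw [posL_ptA] at this
      exact lt_irrefl c this
  · exact Or.inr (heq ▸ pEQ_refl _)

theorem pt_leB {b : X.B.carrier} {c : X.C.carrier} (h : X.iB c ≤ b) :
    X.pLE (.inr (X.iB c)) (.inr b) := by
  rcases h.lt_or_eq with hlt | heq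
  · refine Or.inl (Or.inl ?_)
    constructor
    · rw [posL_ptB]
      intro d hd
      exact lt_trans (X.iB.lt_iff_lt.2 hd) hlt
    · intro hsub
      have : c ∈ X.posL (.inr (X.iB c)) := hsub hlt
      rw [posL_ptB] at this
      exact lt_irrefl c this
  · exact Or.inr (heq ▸ pEQ_refl _)

theorem leB_ptA {b : X.B.carrier} {c : X.C.carrier} (h : b ≤ X.iB c) :
    X.pLE (.inr b) (.inl (X.iA c)) :=
  pLE_congr_right (pEQ_symm (pEQ_pt c)) (leB_pt h)

theorem ptA_leB {b : X.B.carrier} {c : X.C.carrier} (h : X.iB c ≤ b) :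
    X.pLE (.inl (X.iA c)) (.inr b) :=
  pLE_congr_left (pEQ_symm (pEQ_pt c)) (pt_leB h)

/-! the operation on the disjoint union and iterates -/

def gg (X : Ctx) : X.S → X.S := Sum.map X.A.g X.B.g

def it (X : Ctx) (x : X.S) (n : ℕ) : X.S := X.gg^[n] x

@[simp] theorem it_zero (x : X.S) : X.it x 0 = x := rfl

theorem it_succ (x : X.S) (n : ℕ) : X.it x (n + 1) = X.it (X.gg x) n :=
  Function.iterate_succ_apply _ _ _

theorem it_succ' (x : X.S) (n : ℕ) : X.it x (n + 1) = X.gg (X.it x n) :=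
  Function.iterate_succ_apply' _ _ _

@[simp] theorem it_one (x : X.S) : X.it x 1 = X.gg x := rfl

@[simp] theorem gg_inl (a : X.A.carrier) : X.gg (.inl a) = .inl (X.A.g a) := rfl
@[simp] theorem gg_inr (b : X.B.carrier) : X.gg (.inr b) = .inr (X.B.g b) := rfl

theorem it_inl (a : X.A.carrier) (n : ℕ) : X.it (.inl a) n = .inl (X.A.g^[n] a) := by
  induction n with
  | zero => rfl
  | succ k ih => rw [it_succ', ih, gg_inl, Function.iterate_succ_apply']

theorem it_inr (b : X.B.carrier) (n : ℕ) : X.it (.inr b) n = .inr (X.B.g^[n] b) := by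
  induction n with
  | zero => rfl
  | succ k ih => rw [it_succ', ih, gg_inr, Function.iterate_succ_apply']

theorem canon_gg {c : X.C.carrier} {x : X.S} (h : X.canon c x) :
    X.canon (X.C.g c) (X.gg x) := by
  rcases h with rfl | rfl
  · exact Or.inl (by rw [gg_inl, X.hA])
  · exact Or.inr (by rw [gg_inr, X.hB])

theorem canon_it {c : X.C.carrier} {x : X.S} (h : X.canon c x) (n : ℕ) :
    X.canon (X.C.g^[n] c) (X.it x n) := by
  induction n with
  | zero => exact h
  | succ k ih => rw [it_succ', Function.iterate_succ_apply']; exact canon_gg ih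

/-! coherence: a strict separation forces the images to straddle a point -/

theorem coh {x y : X.S} (h : X.pLT x y) :
    ∃ c, X.pLE (X.gg y) (.inl (X.iA c)) ∧ X.pLE (.inl (X.iA c)) (X.gg x) := by
  rcases h with hss | ⟨heq, hFx, hFy⟩
  · obtain ⟨c, hcy, hcx⟩ := Set.exists_of_ssubset hss
    refine ⟨X.C.g c, ?_, ?_⟩
    · cases y with
      | inl a =>
        have : X.A.g a ≤ X.iA (X.C.g c) := by
          rw [X.hA]
          exact X.A.anti (le_of_lt hcy)
        exact leA_pt this
      | inr b =>
        have : X.B.g b ≤ X.iB (X.C.g c) := by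
          rw [X.hB]
          exact X.B.anti (le_of_lt hcy)
        exact leB_ptA this
    · cases x with
      | inl a =>
        have : X.iA (X.C.g c) ≤ X.A.g a := by
          rw [X.hA]
          exact X.A.anti (not_lt.1 hcx)
        exact pt_leA this
      | inr b =>
        have : X.iB (X.C.g c) ≤ X.B.g b := by
          rw [X.hB]
          exact X.B.anti (not_lt.1 hcx)
        exact ptA_leB this
  · -- y is a point of C
    cases y with
    | inl a' =>
      obtain ⟨c, hc⟩ := hFy
      refine ⟨X.C.g c, ?_, ?_⟩
      · rw [gg_inl, ← hc, ← X.hA]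
        exact Or.inr (pEQ_refl _)
      · have hx : X.posL x = Set.Iio c := by
          rw [heq, ← hc, posL_ptA]
        cases x with
        | inl a =>
          have hle : a ≤ X.iA c := by
            by_contra hcon
            have : c ∈ X.posL (.inl a : X.S) := not_le.1 hcon
            rw [hx] at this
            exact lt_irrefl c this
          have : X.iA (X.C.g c) ≤ X.A.g a := by
            rw [X.hA]; exact X.A.anti hle
          exact pt_leA this
        | inr b =>
          have hle : b ≤ X.iB c := by
            by_contra hcon
            have : c ∈ X.posL (.inr b : X.S) := not_le.1 hcon
            rw [hx] at this
            exact lt_irrefl c this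
          have : X.iB (X.C.g c) ≤ X.B.g b := by
            rw [X.hB]; exact X.B.anti hle
          exact ptA_leB this
    | inr b' =>
      obtain ⟨c, hc⟩ := hFy
      refine ⟨X.C.g c, ?_, ?_⟩
      · rw [gg_inr, ← hc, ← X.hB]
        exact Or.inr (pEQ_symm (pEQ_pt _))
      · have hx : X.posL x = Set.Iio c := by
          rw [heq, ← hc, posL_ptB]
        cases x with
        | inl a =>
          have hle : a ≤ X.iA c := by
            by_contra hcon
            have : c ∈ X.posL (.inl a : X.S) := not_le.1 hcon
            rw [hx] at this
            exact lt_irrefl c this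
          have : X.iA (X.C.g c) ≤ X.A.g a := by
            rw [X.hA]; exact X.A.anti hle
          exact pt_leA this
        | inr b =>
          have hle : b ≤ X.iB c := by
            by_contra hcon
            have : c ∈ X.posL (.inr b : X.S) := not_le.1 hcon
            rw [hx] at this
            exact lt_irrefl c this
          have : X.iB (X.C.g c) ≤ X.B.g b := by
            rw [X.hB]; exact X.B.anti hle
          exact ptA_leB this

/-! the level comparisons and the order on the amalgam -/

def eqn (X : Ctx) (x y : X.S) (n : ℕ) : Prop := X.pEQ (X.it x n) (X.it y n)

def sltn (X : Ctx) (x y : X.S) (n : ℕ) : Prop :=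
  if n % 2 = 0 then X.pLT (X.it x n) (X.it y n) else X.pLT (X.it y n) (X.it x n)

def EqAt (X : Ctx) (a : X.A.carrier) (b : X.B.carrier) : Prop :=
  ∃ c, a = X.iA c ∧ b = X.iB c

def omLT (X : Ctx) : X.S → X.S → Prop
  | .inl a, .inl a' => a < a'
  | .inl a, .inr b => ¬ X.EqAt a b ∧ a < X.iA X.c0
  | .inr b, .inl a => ¬ X.EqAt a b ∧ X.iA X.c0 ≤ a
  | .inr b, .inr b' => b < b'

def omEQ (X : Ctx) : X.S → X.S → Prop
  | .inl a, .inl a' => a = a'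
  | .inl a, .inr b => X.EqAt a b
  | .inr b, .inl a => X.EqAt a b
  | .inr b, .inr b' => b = b'

def ltD (X : Ctx) (x y : X.S) : Prop :=
  (∃ n, (∀ m < n, X.eqn x y m) ∧ X.sltn x y n) ∨ ((∀ n, X.eqn x y n) ∧ X.omLT x y)

def eqD (X : Ctx) (x y : X.S) : Prop := (∀ n, X.eqn x y n) ∧ X.omEQ x y

theorem eqn_pEQ {x y : X.S} {n : ℕ} (h : X.eqn x y n) : X.pEQ (X.it x n) (X.it y n) := h

theorem eqn_refl (x : X.S) (n : ℕ) : X.eqn x x n := pEQ_refl _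

theorem eqn_symm {x y : X.S} {n : ℕ} (h : X.eqn x y n) : X.eqn y x n := pEQ_symm h

theorem eqn_trans {x y z : X.S} {n : ℕ} (h : X.eqn x y n) (h' : X.eqn y z n) :
    X.eqn x z n := pEQ_trans h h'

theorem eqn_gg {x y : X.S} {n : ℕ} : X.eqn (X.gg x) (X.gg y) n ↔ X.eqn x y (n + 1) := by
  unfold eqn
  rw [it_succ, it_succ]

theorem sltn_gg {x y : X.S} {n : ℕ} : X.sltn (X.gg x) (X.gg y) n ↔ X.sltn y x (n + 1) := by
  unfold sltn
  rcases Nat.mod_two_eq_zero_or_one n with h | h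
  · rw [if_pos h, if_neg (by omega : ¬ (n + 1) % 2 = 0), it_succ, it_succ]
  · rw [if_neg (by omega : ¬ n % 2 = 0), if_pos (by omega : (n + 1) % 2 = 0), it_succ, it_succ]

theorem sltn_zero {x y : X.S} : X.sltn x y 0 ↔ X.pLT x y := by
  simp [sltn]

theorem sltn_not_of_eqn {x y : X.S} {n : ℕ} (h : X.eqn x y n) : ¬ X.sltn x y n := by
  unfold sltn
  split
  · exact pEQ_not_pLT h
  · exact pEQ_not_pLT (pEQ_symm h)

theorem sltn_or {x y : X.S} {n : ℕ} (h : ¬ X.eqn x y n) :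
    X.sltn x y n ∨ X.sltn y x n := by
  rcases pTot (X.it x n) (X.it y n) with h' | h' | h'
  · unfold sltn
    split
    · exact Or.inl h'
    · exact Or.inr h'
  · exact absurd h' h
  · unfold sltn
    split
    · exact Or.inr h'
    · exact Or.inl h'

theorem sltn_asymm {x y : X.S} {n : ℕ} (h : X.sltn x y n) (h' : X.sltn y x n) : False := by
  unfold sltn at h h'
  split at h <;> split at h' <;> first
    | exact pLT_asymm h h'
    | omega

theorem sltn_trans {x y z : X.S} {n : ℕ} (h : X.sltn x y n) (h' : X.sltn y z n) :
    X.sltn x z n := by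
  unfold sltn at *
  split at h <;> split at h' <;> split <;> first
    | exact pLT_trans h h'
    | exact pLT_trans h' h
    | omega

theorem sltn_congr_left {x x' y : X.S} {n : ℕ} (he : X.eqn x x' n) (h : X.sltn x y n) :
    X.sltn x' y n := by
  unfold sltn at *
  by_cases h2 : n % 2 = 0
  · rw [if_pos h2] at h ⊢
    exact pLT_congr_left he h
  · rw [if_neg h2] at h ⊢
    have he' : X.pEQ (X.it x n) (X.it x' n) := he
    exact pLT_congr_right he' h

theorem sltn_congr_right {x y y' : X.S} {n : ℕ} (he : X.eqn y y' n) (h : X.sltn x y n) :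
    X.sltn x y' n := by
  unfold sltn at *
  by_cases h2 : n % 2 = 0
  · rw [if_pos h2] at h ⊢
    exact pLT_congr_right he h
  · rw [if_neg h2] at h ⊢
    have he' : X.pEQ (X.it y n) (X.it y' n) := he
    exact pLT_congr_left he' h

theorem eqn_all_of_canon {c : X.C.carrier} {x y : X.S} (hx : X.canon c x)
    (hy : X.canon c y) (n : ℕ) : X.eqn x y n :=
  canon_pEQ (canon_it hx n) (canon_it hy n)

theorem omLT_not_of_canon {c : X.C.carrier} {u v : X.S} (hu : X.canon c u)
    (hv : X.canon c v) : ¬ X.omLT u v := by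
  rcases hu with rfl | rfl <;> rcases hv with rfl | rfl <;> intro h
  · exact lt_irrefl _ h
  · exact h.1 ⟨c, rfl, rfl⟩
  · exact h.1 ⟨c, rfl, rfl⟩
  · exact lt_irrefl _ h

theorem omEQ_refl (x : X.S) : X.omEQ x x := by
  cases x with
  | inl a => exact rfl
  | inr b => exact rfl

theorem eqD_refl (x : X.S) : X.eqD x x := ⟨eqn_refl x, omEQ_refl x⟩

theorem omEQ_symm {x y : X.S} (h : X.omEQ x y) : X.omEQ y x := by
  cases x <;> cases y <;> first
    | exact h.symm
    | exact h

theorem eqD_symm {x y : X.S} (h : X.eqD x y) : X.eqD y x :=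
  ⟨fun n => eqn_symm (h.1 n), omEQ_symm h.2⟩

theorem eqD_not_ltD {x y : X.S} (he : X.eqD x y) : ¬ X.ltD x y := by
  rintro (⟨n, -, hs⟩ | ⟨-, ho⟩)
  · exact sltn_not_of_eqn (he.1 n) hs
  · have hom := he.2
    cases x <;> cases y
    · exact absurd ho (by rw [show _ = _ from hom]; exact lt_irrefl _)
    · exact ho.1 hom
    · exact ho.1 hom
    · exact absurd ho (by rw [show _ = _ from hom]; exact lt_irrefl _)

theorem ltD_irrefl (x : X.S) : ¬ X.ltD x x := eqD_not_ltD (eqD_refl x)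

theorem ltD_trichot (x y : X.S) : X.ltD x y ∨ X.eqD x y ∨ X.ltD y x := by
  by_cases hall : ∀ n, X.eqn x y n
  · have hall' : ∀ n, X.eqn y x n := fun n => eqn_symm (hall n)
    cases x with
    | inl a =>
      cases y with
      | inl a' =>
        rcases lt_trichotomy a a' with h | h | h
        · exact Or.inl (Or.inr ⟨hall, h⟩)
        · exact Or.inr (Or.inl ⟨hall, h⟩)
        · exact Or.inr (Or.inr (Or.inr ⟨hall', h⟩))
      | inr b =>
        by_cases hE : X.EqAt a b
        · exact Or.inr (Or.inl ⟨hall, hE⟩)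
        · rcases lt_or_ge a (X.iA X.c0) with h | h
          · exact Or.inl (Or.inr ⟨hall, hE, h⟩)
          · exact Or.inr (Or.inr (Or.inr ⟨hall', hE, h⟩))
    | inr b =>
      cases y with
      | inl a =>
        by_cases hE : X.EqAt a b
        · exact Or.inr (Or.inl ⟨hall, hE⟩)
        · rcases lt_or_ge a (X.iA X.c0) with h | h
          · exact Or.inr (Or.inr (Or.inr ⟨hall', hE, h⟩))
          · exact Or.inl (Or.inr ⟨hall, hE, h⟩)
      | inr b' =>
        rcases lt_trichotomy b b' with h | h | h
        · exact Or.inl (Or.inr ⟨hall, h⟩)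
        · exact Or.inr (Or.inl ⟨hall, h⟩)
        · exact Or.inr (Or.inr (Or.inr ⟨hall', h⟩))
  · push_neg at hall
    haveI : DecidablePred fun n => ¬ X.eqn x y n := Classical.decPred _
    have hex : ∃ n, ¬ X.eqn x y n := hall
    set n0 := Nat.find hex with hn0def
    have hn0 : ¬ X.eqn x y n0 := Nat.find_spec hex
    have hmin : ∀ m < n0, X.eqn x y m := fun m hm => of_not_not (Nat.find_min hex hm)
    rcases sltn_or hn0 with h | h
    · exact Or.inl (Or.inl ⟨n0, hmin, h⟩)
    · exact Or.inr (Or.inr (Or.inl ⟨n0, fun m hm => eqn_symm (hmin m hm), h⟩))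

theorem omLT_trans {x y z : X.S} (h0xy : X.eqn x y 0) (h0yz : X.eqn y z 0)
    (h1 : X.omLT x y) (h2 : X.omLT y z) : X.omLT x z := by
  have h0xy' : X.pEQ x y := h0xy
  have h0yz' : X.pEQ y z := h0yz
  cases x with
  | inl a =>
    cases y with
    | inl a' =>
      cases z with
      | inl a'' => exact lt_trans h1 h2
      | inr b =>
        refine ⟨?_, lt_trans h1 h2.2⟩
        rintro ⟨c, rfl, rfl⟩
        have : X.canon c (.inl a' : X.S) :=
          pEQ_canon (Or.inr rfl) h0yz'
        rcases this with h' | h'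
        · rw [Sum.inl.injEq] at h'
          subst h'
          exact lt_irrefl _ h1
        · exact nomatch h'
    | inr b =>
      cases z with
      | inl a' =>
        show a < a'
        exact lt_of_lt_of_le h1.2 h2.2
      | inr b' =>
        refine ⟨?_, h1.2⟩
        rintro ⟨c, rfl, rfl⟩
        have : X.canon c (.inr b : X.S) :=
          pEQ_canon (Or.inl rfl) (pEQ_symm h0xy')
        rcases this with h' | h'
        · exact nomatch h'
        · rw [Sum.inr.injEq] at h'
          subst h'
          exact lt_irrefl _ h2
  | inr b =>
    cases y with
    | inl a =>
      cases z with
      | inl a' =>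
        refine ⟨?_, le_trans h1.2 h2.le⟩
        rintro ⟨c, rfl, rfl⟩
        have : X.canon c (.inl a : X.S) :=
          pEQ_canon (Or.inr rfl) (pEQ_symm h0xy')
        rcases this with h' | h'
        · rw [Sum.inl.injEq] at h'
          subst h'
          exact lt_irrefl _ h2
        · exact nomatch h'
      | inr b' => exact absurd h2.2 (not_lt_of_ge h1.2)
    | inr b' =>
      cases z with
      | inl a =>
        refine ⟨?_, h2.2⟩
        rintro ⟨c, rfl, rfl⟩
        have : X.canon c (.inr b' : X.S) :=
          pEQ_canon (Or.inr rfl) (pEQ_symm h0xy')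
        rcases this with h' | h'
        · exact nomatch h'
        · rw [Sum.inr.injEq] at h'
          subst h'
          exact lt_irrefl _ h1
      | inr b'' => exact lt_trans h1 h2

theorem ltD_trans {x y z : X.S} (h : X.ltD x y) (h' : X.ltD y z) : X.ltD x z := by
  rcases h with ⟨n1, he1, hs1⟩ | ⟨ha1, ho1⟩ <;>
    rcases h' with ⟨n2, he2, hs2⟩ | ⟨ha2, ho2⟩
  · rcases lt_trichotomy n1 n2 with hn | hn | hn
    · exact Or.inl ⟨n1, fun m hm => eqn_trans (he1 m hm) (he2 m (hm.trans hn)),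
        sltn_congr_right (he2 n1 hn) hs1⟩
    · subst hn
      exact Or.inl ⟨n1, fun m hm => eqn_trans (he1 m hm) (he2 m hm), sltn_trans hs1 hs2⟩
    · exact Or.inl ⟨n2, fun m hm => eqn_trans (he1 m (hm.trans hn)) (he2 m hm),
        sltn_congr_left (eqn_symm (he1 n2 hn)) hs2⟩
  · exact Or.inl ⟨n1, fun m hm => eqn_trans (he1 m hm) (ha2 m),
      sltn_congr_right (ha2 n1) hs1⟩
  · exact Or.inl ⟨n2, fun m hm => eqn_trans (ha1 m) (he2 m hm),
      sltn_congr_left (eqn_symm (ha1 n2)) hs2⟩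
  · exact Or.inr ⟨fun n => eqn_trans (ha1 n) (ha2 n), omLT_trans (ha1 0) (ha2 0) ho1 ho2⟩

theorem ltD_asymm {x y : X.S} (h : X.ltD x y) (h' : X.ltD y x) : False :=
  ltD_irrefl x (ltD_trans h h')

/-! coherence at the level of the order `ltD` -/

theorem point_step {x y : X.S} (h0 : X.pLT x y) (h1 : X.pEQ (X.gg x) (X.gg y)) :
    ∃ c, X.canon c (X.gg x) ∧ X.canon c (X.gg y) := by
  obtain ⟨c, hy', hx'⟩ := coh h0
  have hxpt : X.pLE (X.gg x) (.inl (X.iA c)) := pLE_congr_left (pEQ_symm h1) hy'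
  have hx : X.pEQ (X.gg x) (.inl (X.iA c)) := pLE_antisymm hxpt hx'
  exact ⟨c, pEQ_canon (Or.inl rfl) hx, pEQ_canon (Or.inl rfl) (pEQ_trans (pEQ_symm h1) hx)⟩

theorem omEQ_gg {x y : X.S} (h : X.omEQ x y) : X.omEQ (X.gg x) (X.gg y) := by
  cases x with
  | inl a =>
    cases y with
    | inl a' =>
      have h' : a = a' := h
      show X.A.g a = X.A.g a'
      rw [h']
    | inr b =>
      obtain ⟨c, rfl, rfl⟩ := (h : X.EqAt a b)
      exact ⟨X.C.g c, (X.hA c).symm, (X.hB c).symm⟩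
  | inr b =>
    cases y with
    | inl a =>
      obtain ⟨c, rfl, rfl⟩ := (h : X.EqAt a b)
      exact ⟨X.C.g c, (X.hA c).symm, (X.hB c).symm⟩
    | inr b' =>
      have h' : b = b' := h
      show X.B.g b = X.B.g b'
      rw [h']

theorem eqD_gg {x y : X.S} (h : X.eqD x y) : X.eqD (X.gg x) (X.gg y) :=
  ⟨fun n => eqn_gg.2 (h.1 (n + 1)), omEQ_gg h.2⟩

/-- The key antitonicity statement. -/
theorem ltD_gg_flip {x y : X.S} (hn : ¬ X.ltD y x) (h : X.ltD (X.gg x) (X.gg y)) :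
    False := by
  rcases ltD_trichot x y with hxy | hxy | hxy
  swap
  · exact eqD_not_ltD (eqD_gg hxy) h
  swap
  · exact hn hxy
  rcases hxy with ⟨n1, he1, hs1⟩ | ⟨ha1, ho1⟩
  · rcases h with ⟨n2, he2', hs2'⟩ | ⟨ha2', ho2'⟩
    · have he2 : ∀ m < n2, X.eqn x y (m + 1) := fun m hm => eqn_gg.1 (he2' m hm)
      have hs2 : X.sltn y x (n2 + 1) := sltn_gg.1 hs2'
      rcases Nat.eq_zero_or_pos n1 with h10 | h1pos
      · subst h10
        have hpt : X.pLT x y := sltn_zero.1 hs1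
        rcases Nat.eq_zero_or_pos n2 with h20 | h2pos
        · subst h20
          obtain ⟨c, hy', hx'⟩ := coh hpt
          have : X.pLE (X.gg y) (X.gg x) := pLE_trans hy' hx'
          have hlt1 : X.pLT (X.it x 1) (X.it y 1) := by
            have := hs2
            unfold sltn at this
            rw [if_neg (by omega : ¬ (0 + 1) % 2 = 0)] at this
            exact this
          exact pLE_not_pLT this (by rw [it_one, it_one] at hlt1; exact hlt1)
        · have heq1 : X.pEQ (X.gg x) (X.gg y) := by
            have := he2 0 h2pos
            unfold eqn at this
            rw [it_one, it_one] at this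
            exact this
          obtain ⟨c, hcx, hcy⟩ := point_step hpt heq1
          have : X.eqn (X.gg x) (X.gg y) n2 := eqn_all_of_canon hcx hcy n2
          exact sltn_not_of_eqn this hs2'
      · rcases lt_trichotomy n1 (n2 + 1) with hn' | hn' | hn'
        · have : X.eqn x y n1 := by
            obtain ⟨m, rfl⟩ : ∃ m, n1 = m + 1 := ⟨n1 - 1, by omega⟩
            exact he2 m (by omega)
          exact sltn_not_of_eqn this hs1
        · rw [← hn'] at hs2
          exact sltn_asymm hs1 hs2
        · exact sltn_not_of_eqn (eqn_symm (he1 (n2 + 1) hn')) hs2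
    · have ha2 : ∀ n, X.eqn x y (n + 1) := fun n => eqn_gg.1 (ha2' n)
      rcases Nat.eq_zero_or_pos n1 with h10 | h1pos
      · subst h10
        have hpt : X.pLT x y := sltn_zero.1 hs1
        have heq1 : X.pEQ (X.gg x) (X.gg y) := ha2' 0
        obtain ⟨c, hcx, hcy⟩ := point_step hpt heq1
        exact omLT_not_of_canon hcx hcy ho2'
      · have : X.eqn x y n1 := by
          obtain ⟨m, rfl⟩ : ∃ m, n1 = m + 1 := ⟨n1 - 1, by omega⟩
          exact ha2 m
        exact sltn_not_of_eqn this hs1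
  · rcases h with ⟨n2, he2', hs2'⟩ | ⟨ha2', ho2'⟩
    · exact sltn_not_of_eqn (eqn_symm (ha1 (n2 + 1))) (sltn_gg.1 hs2')
    · -- both at level ω : the tie-breaking rule flips under g
      cases x with
      | inl a =>
        cases y with
        | inl a' =>
          have h1 : a < a' := ho1
          have h2 : X.A.g a < X.A.g a' := ho2'
          exact absurd h2 (not_lt_of_ge (X.A.anti h1.le))
        | inr b =>
          have h1 : ¬ X.EqAt a b ∧ a < X.iA X.c0 := ho1
          have h2 : ¬ X.EqAt (X.A.g a) (X.B.g b) ∧ X.A.g a < X.iA X.c0 := ho2'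
          have : X.iA X.c0 ≤ X.A.g a := by
            have := X.A.anti h1.2.le
            rw [← X.hA, X.hc0] at this
            exact this
          exact absurd h2.2 (not_lt_of_ge this)
      | inr b =>
        cases y with
        | inl a =>
          have h1 : ¬ X.EqAt a b ∧ X.iA X.c0 ≤ a := ho1
          have h2 : ¬ X.EqAt (X.A.g a) (X.B.g b) ∧ X.iA X.c0 ≤ X.A.g a := ho2'
          rcases h1.2.lt_or_eq with hlt | heqc
          · have hga : X.A.g a ≤ X.iA X.c0 := by
              have := X.A.anti hlt.le
              rw [← X.hA, X.hc0] at this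
              exact this
            have hga' : X.A.g a = X.iA X.c0 := le_antisymm hga h2.2
            have h1' : X.pEQ (X.it (.inr b : X.S) 1) (X.it (.inl a : X.S) 1) := ha1 1
            rw [it_one, it_one, gg_inl, gg_inr] at h1'
            have : X.canon X.c0 (.inr (X.B.g b) : X.S) := by
              refine pEQ_canon (Or.inl ?_) h1'
              rw [hga']
            rcases this with h' | h'
            · exact nomatch h'
            · rw [Sum.inr.injEq] at h'
              exact h2.1 ⟨X.c0, hga', h'⟩
          · have h0' : X.pEQ (.inr b : X.S) (.inl a : X.S) := ha1 0
            have : X.canon X.c0 (.inr b : X.S) := by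
              refine pEQ_canon (Or.inl ?_) h0'
              rw [heqc]
            rcases this with h' | h'
            · exact nomatch h'
            · rw [Sum.inr.injEq] at h'
              exact h1.1 ⟨X.c0, heqc.symm, h'⟩
        | inr b' =>
          have h1 : b < b' := ho1
          have h2 : X.B.g b < X.B.g b' := ho2'
          exact absurd h2 (not_lt_of_ge (X.B.anti h1.le))

/-! the canonical copies of `A` and `B` inside the order -/

theorem pLE_inl {u v : X.A.carrier} (h : u ≤ v) : X.pLE (.inl u) (.inl v) := by
  have hsub : X.posL (.inl u : X.S) ⊆ X.posL (.inl v : X.S) :=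
    fun d hd => lt_of_lt_of_le hd h
  rcases hsub.ssubset_or_eq with hss | heq
  · exact Or.inl (Or.inl hss)
  · rcases h.lt_or_eq with hlt | rfl
    · by_cases hF : X.posF (.inl u : X.S)
      · obtain ⟨d, hd⟩ := hF
        have : d ∈ X.posL (.inl v : X.S) := by rw [← hd] at hlt; exact hlt
        rw [← heq, ← hd, posL_ptA] at this
        exact absurd this (lt_irrefl d)
      · by_cases hFv : X.posF (.inl v : X.S)
        · exact Or.inl (Or.inr ⟨heq, hF, hFv⟩)
        · exact Or.inr ⟨heq, iff_of_false hF hFv⟩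
    · exact Or.inr (pEQ_refl _)

theorem pLE_inr {u v : X.B.carrier} (h : u ≤ v) : X.pLE (.inr u) (.inr v) := by
  have hsub : X.posL (.inr u : X.S) ⊆ X.posL (.inr v : X.S) :=
    fun d hd => lt_of_lt_of_le hd h
  rcases hsub.ssubset_or_eq with hss | heq
  · exact Or.inl (Or.inl hss)
  · rcases h.lt_or_eq with hlt | rfl
    · by_cases hF : X.posF (.inr u : X.S)
      · obtain ⟨d, hd⟩ := hF
        have : d ∈ X.posL (.inr v : X.S) := by rw [← hd] at hlt; exact hlt
        rw [← heq, ← hd, posL_ptB] at this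
        exact absurd this (lt_irrefl d)
      · by_cases hFv : X.posF (.inr v : X.S)
        · exact Or.inl (Or.inr ⟨heq, hF, hFv⟩)
        · exact Or.inr ⟨heq, iff_of_false hF hFv⟩
    · exact Or.inr (pEQ_refl _)

theorem iter_alt_A {u v : X.A.carrier} (h : u ≤ v) (n : ℕ) :
    (n % 2 = 0 ∧ X.A.g^[n] u ≤ X.A.g^[n] v) ∨ (n % 2 = 1 ∧ X.A.g^[n] v ≤ X.A.g^[n] u) := by
  induction n with
  | zero => exact Or.inl ⟨rfl, h⟩
  | succ k ih =>
    rcases ih with ⟨hk, hle⟩ | ⟨hk, hle⟩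
    · refine Or.inr ⟨by omega, ?_⟩
      rw [Function.iterate_succ_apply', Function.iterate_succ_apply']
      exact X.A.anti hle
    · refine Or.inl ⟨by omega, ?_⟩
      rw [Function.iterate_succ_apply', Function.iterate_succ_apply']
      exact X.A.anti hle

theorem iter_alt_B {u v : X.B.carrier} (h : u ≤ v) (n : ℕ) :
    (n % 2 = 0 ∧ X.B.g^[n] u ≤ X.B.g^[n] v) ∨ (n % 2 = 1 ∧ X.B.g^[n] v ≤ X.B.g^[n] u) := by
  induction n with
  | zero => exact Or.inl ⟨rfl, h⟩
  | succ k ih =>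
    rcases ih with ⟨hk, hle⟩ | ⟨hk, hle⟩
    · refine Or.inr ⟨by omega, ?_⟩
      rw [Function.iterate_succ_apply', Function.iterate_succ_apply']
      exact X.B.anti hle
    · refine Or.inl ⟨by omega, ?_⟩
      rw [Function.iterate_succ_apply', Function.iterate_succ_apply']
      exact X.B.anti hle

theorem ltD_inl {a a' : X.A.carrier} (h : a < a') : X.ltD (.inl a) (.inl a') := by
  by_cases hall : ∀ n, X.eqn (.inl a : X.S) (.inl a') n
  · exact Or.inr ⟨hall, h⟩
  · push_neg at hall
    haveI : DecidablePred fun n => ¬ X.eqn (.inl a : X.S) (.inl a') n := Classical.decPred _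
    have hex : ∃ n, ¬ X.eqn (.inl a : X.S) (.inl a') n := hall
    refine Or.inl ⟨Nat.find hex, fun m hm => of_not_not (Nat.find_min hex hm), ?_⟩
    have hn0 : ¬ X.eqn (.inl a : X.S) (.inl a') (Nat.find hex) := Nat.find_spec hex
    set n := Nat.find hex with hndef
    unfold sltn
    rcases iter_alt_A h.le n with ⟨hk, hle⟩ | ⟨hk, hle⟩
    · rw [if_pos hk]
      have hple : X.pLE (X.it (.inl a) n) (X.it (.inl a') n) := by
        rw [it_inl, it_inl]
        exact pLE_inl hle
      rcases hple with h' | h'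
      · exact h'
      · exact absurd h' hn0
    · rw [if_neg (by omega)]
      have hple : X.pLE (X.it (.inl a') n) (X.it (.inl a) n) := by
        rw [it_inl, it_inl]
        exact pLE_inl hle
      rcases hple with h' | h'
      · exact h'
      · exact absurd (pEQ_symm h') hn0

theorem ltD_inr {b b' : X.B.carrier} (h : b < b') : X.ltD (.inr b) (.inr b') := by
  by_cases hall : ∀ n, X.eqn (.inr b : X.S) (.inr b') n
  · exact Or.inr ⟨hall, h⟩
  · push_neg at hall
    haveI : DecidablePred fun n => ¬ X.eqn (.inr b : X.S) (.inr b') n := Classical.decPred _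
    have hex : ∃ n, ¬ X.eqn (.inr b : X.S) (.inr b') n := hall
    refine Or.inl ⟨Nat.find hex, fun m hm => of_not_not (Nat.find_min hex hm), ?_⟩
    have hn0 : ¬ X.eqn (.inr b : X.S) (.inr b') (Nat.find hex) := Nat.find_spec hex
    set n := Nat.find hex with hndef
    unfold sltn
    rcases iter_alt_B h.le n with ⟨hk, hle⟩ | ⟨hk, hle⟩
    · rw [if_pos hk]
      have hple : X.pLE (X.it (.inr b) n) (X.it (.inr b') n) := by
        rw [it_inr, it_inr]
        exact pLE_inr hle
      rcases hple with h' | h'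
      · exact h'
      · exact absurd h' hn0
    · rw [if_neg (by omega)]
      have hple : X.pLE (X.it (.inr b') n) (X.it (.inr b) n) := by
        rw [it_inr, it_inr]
        exact pLE_inr hle
      rcases hple with h' | h'
      · exact h'
      · exact absurd (pEQ_symm h') hn0

/-! the amalgam carrier: representatives -/

def Del (X : Ctx) : Type := X.A.carrier ⊕ {b : X.B.carrier // b ∉ Set.range ⇑X.iB}

def em (X : Ctx) : X.Del → X.S := Sum.map id Subtype.val

open Classical in
noncomputable def norm (X : Ctx) (s : X.S) : X.Del :=
  Sum.elim (fun a => .inl a)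
    (fun b => if h : b ∈ Set.range ⇑X.iB then .inl (X.iA h.choose) else .inr ⟨b, h⟩) s

@[simp] theorem em_inl (a : X.A.carrier) : X.em (.inl a) = .inl a := rfl

@[simp] theorem norm_inl (a : X.A.carrier) : X.norm (.inl a) = .inl a := rfl

open Classical in
theorem norm_inr_mem {b : X.B.carrier} (h : b ∈ Set.range ⇑X.iB) :
    X.norm (.inr b) = .inl (X.iA h.choose) := by
  unfold norm
  show dite _ _ _ = _
  exact dif_pos h

open Classical in
theorem norm_inr_not {b : X.B.carrier} (h : b ∉ Set.range ⇑X.iB) :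
    X.norm (.inr b) = .inr ⟨b, h⟩ := by
  unfold norm
  show dite _ _ _ = _
  exact dif_neg h

theorem eqD_em_norm (s : X.S) : X.eqD (X.em (X.norm s)) s := by
  cases s with
  | inl a => exact eqD_refl _
  | inr b =>
    by_cases h : b ∈ Set.range ⇑X.iB
    · rw [norm_inr_mem h]
      have hc : X.iB h.choose = b := h.choose_spec
      have hcanB : X.canon h.choose (.inr b : X.S) := Or.inr (by rw [hc])
      refine ⟨fun n => eqn_all_of_canon (Or.inl rfl) hcanB n, ?_⟩
      exact ⟨h.choose, rfl, hc.symm⟩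
    · rw [norm_inr_not h]
      exact eqD_refl _

theorem ltD_congr_left {s s' t : X.S} (he : X.eqD s s') (h : X.ltD s t) : X.ltD s' t := by
  rcases h with ⟨n, hme, hs⟩ | ⟨hall, hom⟩
  · exact Or.inl ⟨n, fun m hm => eqn_trans (eqn_symm (he.1 m)) (hme m hm),
      sltn_congr_left (he.1 n) hs⟩
  · refine Or.inr ⟨fun n => eqn_trans (eqn_symm (he.1 n)) (hall n), ?_⟩
    have h0 : X.pEQ s t := hall 0
    cases s with
    | inl a =>
      cases s' with
      | inl a2 =>
        have : a = a2 := he.2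
        subst this
        exact hom
      | inr b2 =>
        obtain ⟨c, rfl, rfl⟩ := (he.2 : X.EqAt a b2)
        cases t with
        | inl a'' =>
          have hcan : X.canon c (.inl a'' : X.S) := pEQ_canon (Or.inl rfl) (pEQ_symm h0)
          rcases hcan with h' | h'
          · rw [Sum.inl.injEq] at h'
            subst h'
            exact absurd (hom : X.iA c < X.iA c) (lt_irrefl _)
          · exact nomatch h'
        | inr b'' =>
          have hcan : X.canon c (.inr b'' : X.S) := pEQ_canon (Or.inl rfl) (pEQ_symm h0)
          rcases hcan with h' | h'
          · exact nomatch h'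
          · rw [Sum.inr.injEq] at h'
            exact absurd ⟨c, rfl, h'⟩ (hom : ¬ X.EqAt _ _ ∧ _).1
    | inr b =>
      cases s' with
      | inr b2 =>
        have : b = b2 := he.2
        subst this
        exact hom
      | inl a2 =>
        obtain ⟨c, rfl, rfl⟩ := (he.2 : X.EqAt a2 b)
        cases t with
        | inl a'' =>
          have hcan : X.canon c (.inl a'' : X.S) := pEQ_canon (Or.inr rfl) (pEQ_symm h0)
          rcases hcan with h' | h'
          · rw [Sum.inl.injEq] at h'
            subst h'
            exact absurd ⟨c, rfl, rfl⟩ (hom : ¬ X.EqAt _ _ ∧ _).1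
          · exact nomatch h'
        | inr b'' =>
          have hcan : X.canon c (.inr b'' : X.S) := pEQ_canon (Or.inr rfl) (pEQ_symm h0)
          rcases hcan with h' | h'
          · exact nomatch h'
          · rw [Sum.inr.injEq] at h'
            subst h'
            exact absurd (hom : X.iB c < X.iB c) (lt_irrefl _)

theorem ltD_congr_right {s t t' : X.S} (he : X.eqD t t') (h : X.ltD s t) : X.ltD s t' := by
  rcases h with ⟨n, hme, hs⟩ | ⟨hall, hom⟩
  · exact Or.inl ⟨n, fun m hm => eqn_trans (hme m hm) (he.1 m),
      sltn_congr_right (he.1 n) hs⟩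
  · refine Or.inr ⟨fun n => eqn_trans (hall n) (he.1 n), ?_⟩
    have h0 : X.pEQ s t := hall 0
    cases t with
    | inl a =>
      cases t' with
      | inl a2 =>
        have : a = a2 := he.2
        subst this
        exact hom
      | inr b2 =>
        obtain ⟨c, rfl, rfl⟩ := (he.2 : X.EqAt a b2)
        cases s with
        | inl a'' =>
          have hcan : X.canon c (.inl a'' : X.S) := pEQ_canon (Or.inl rfl) h0
          rcases hcan with h' | h'
          · rw [Sum.inl.injEq] at h'
            subst h'
            exact absurd (hom : X.iA c < X.iA c) (lt_irrefl _)
          · exact nomatch h'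
        | inr b'' =>
          have hcan : X.canon c (.inr b'' : X.S) := pEQ_canon (Or.inl rfl) h0
          rcases hcan with h' | h'
          · exact nomatch h'
          · rw [Sum.inr.injEq] at h'
            subst h'
            exact absurd ⟨c, rfl, rfl⟩ (hom : ¬ X.EqAt _ _ ∧ _).1
    | inr b =>
      cases t' with
      | inr b2 =>
        have : b = b2 := he.2
        subst this
        exact hom
      | inl a2 =>
        obtain ⟨c, rfl, rfl⟩ := (he.2 : X.EqAt a2 b)
        cases s with
        | inl a'' =>
          have hcan : X.canon c (.inl a'' : X.S) := pEQ_canon (Or.inr rfl) h0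
          rcases hcan with h' | h'
          · rw [Sum.inl.injEq] at h'
            subst h'
            exact absurd ⟨c, rfl, rfl⟩ (hom : ¬ X.EqAt _ _ ∧ _).1
          · exact nomatch h'
        | inr b'' =>
          have hcan : X.canon c (.inr b'' : X.S) := pEQ_canon (Or.inr rfl) h0
          rcases hcan with h' | h'
          · exact nomatch h'
          · rw [Sum.inr.injEq] at h'
            subst h'
            exact absurd (hom : X.iB c < X.iB c) (lt_irrefl _)

theorem eqD_em {u v : X.Del} (h : X.eqD (X.em u) (X.em v)) : u = v := by
  cases u with
  | inl a =>
    cases v with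
    | inl a' =>
      have : a = a' := h.2
      rw [this]
    | inr b =>
      obtain ⟨c, -, hc⟩ := (h.2 : X.EqAt a b.val)
      exact absurd ⟨c, hc.symm⟩ b.property
  | inr b =>
    cases v with
    | inl a =>
      obtain ⟨c, -, hc⟩ := (h.2 : X.EqAt a b.val)
      exact absurd ⟨c, hc.symm⟩ b.property
    | inr b' =>
      have : b.val = b'.val := h.2
      rw [Subtype.ext this]

/-- The strict order on representatives. -/
def rD (X : Ctx) (u v : X.Del) : Prop := X.ltD (X.em u) (X.em v)

theorem rD_sto : IsStrictTotalOrder X.Del X.rD where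
  trichotomous := by
    intro u v
    refine fun h1 h2 => (?_ : X.rD u v ∨ u = v ∨ X.rD v u).elim (fun h => absurd h h1) (fun h => h.elim id (fun h => absurd h h2))
    rcases ltD_trichot (X.em u) (X.em v) with h | h | h
    · exact Or.inl h
    · exact Or.inr (Or.inl (eqD_em h))
    · exact Or.inr (Or.inr h)
  irrefl := fun u => ltD_irrefl (X.em u)
  trans := fun _ _ _ h h' => ltD_trans h h'

noncomputable def delLO (X : Ctx) : LinearOrder X.Del := by
  haveI := (rD_sto : IsStrictTotalOrder X.Del X.rD)
  haveI : DecidableRel X.rD := Classical.decRel _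
  exact linearOrderOfSTO X.rD

noncomputable def gD (X : Ctx) (u : X.Del) : X.Del := X.norm (X.gg (X.em u))

theorem ltD_gD_iff {u v : X.Del} :
    X.ltD (X.em (X.gD u)) (X.em (X.gD v)) ↔ X.ltD (X.gg (X.em u)) (X.gg (X.em v)) := by
  constructor
  · intro h
    exact ltD_congr_right (eqD_em_norm _)
      (ltD_congr_left (eqD_em_norm _) h)
  · intro h
    exact ltD_congr_right (eqD_symm (eqD_em_norm _))
      (ltD_congr_left (eqD_symm (eqD_em_norm _)) h)

/-- The amalgam. -/
noncomputable def DD (X : Ctx) : LinOrderAnti := by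
  haveI := (rD_sto : IsStrictTotalOrder X.Del X.rD)
  haveI : DecidableRel X.rD := Classical.decRel _
  exact
  { carrier := X.Del
    linOrd := linearOrderOfSTO X.rD
    g := X.gD
    anti := by
      intro u v huv
      have huv' : u = v ∨ X.rD u v := huv
      show X.gD v = X.gD u ∨ X.rD (X.gD v) (X.gD u)
      rcases huv' with rfl | h
      · exact Or.inl rfl
      · rcases ltD_trichot (X.em (X.gD v)) (X.em (X.gD u)) with h' | h' | h'
        · exact Or.inr h'
        · exact Or.inl (eqD_em h')
        · exfalso
          have h'' : X.ltD (X.gg (X.em u)) (X.gg (X.em v)) := ltD_gD_iff.1 h'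
          exact ltD_gg_flip (fun hyx => ltD_asymm h hyx) h'' }

theorem DD_lt_iff {u v : X.DD.carrier} : u < v ↔ X.rD u v := Iff.rfl

/-- The embedding of `A` into the amalgam. -/
noncomputable def jA (X : Ctx) : X.A.carrier ↪o X.DD.carrier :=
  OrderEmbedding.ofStrictMono (fun a => (.inl a : X.Del))
    (fun a a' h => DD_lt_iff.2 (ltD_inl h))

/-- The embedding of `B` into the amalgam. -/
noncomputable def jB (X : Ctx) : X.B.carrier ↪o X.DD.carrier :=
  OrderEmbedding.ofStrictMono (fun b => X.norm (.inr b))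
    (fun b b' h => by
      refine DD_lt_iff.2 ?_
      show X.ltD (X.em (X.norm (.inr b))) (X.em (X.norm (.inr b')))
      exact ltD_congr_right (eqD_symm (eqD_em_norm _))
        (ltD_congr_left (eqD_symm (eqD_em_norm _)) (ltD_inr h)))

theorem jA_comm (a : X.A.carrier) : X.jA (X.A.g a) = X.DD.g (X.jA a) := rfl

theorem jB_norm (b : X.B.carrier) : X.jB b = X.norm (.inr b) := rfl

theorem jB_comm (b : X.B.carrier) : X.jB (X.B.g b) = X.DD.g (X.jB b) := by
  show X.norm (.inr (X.B.g b)) = X.gD (X.norm (.inr b))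
  unfold gD
  by_cases h : b ∈ Set.range ⇑X.iB
  · have hc : X.iB h.choose = b := h.choose_spec
    have h1 : X.norm (.inr b) = .inl (X.iA h.choose) := norm_inr_mem h
    rw [h1]
    have h2 : X.gg (X.em (.inl (X.iA h.choose) : X.Del)) = .inl (X.iA (X.C.g h.choose)) := by
      rw [em_inl, gg_inl, X.hA]
    rw [h2]
    have hgb : X.B.g b ∈ Set.range ⇑X.iB := ⟨X.C.g h.choose, by rw [X.hB, hc]⟩
    have h3 : X.norm (.inr (X.B.g b)) = .inl (X.iA hgb.choose) := norm_inr_mem hgb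
    have h4 : hgb.choose = X.C.g h.choose := by
      apply X.iB.injective
      rw [hgb.choose_spec, X.hB, hc]
    rw [h3, h4]
    rfl
  · have h1 : X.norm (.inr b) = .inr ⟨b, h⟩ := norm_inr_not h
    rw [h1]
    rfl

theorem jAiA_eq_jBiB (c : X.C.carrier) : X.jA (X.iA c) = X.jB (X.iB c) := by
  show (.inl (X.iA c) : X.Del) = X.norm (.inr (X.iB c))
  have h : X.iB c ∈ Set.range ⇑X.iB := ⟨c, rfl⟩
  have h4 : h.choose = c := X.iB.injective h.choose_spec
  rw [norm_inr_mem h, h4]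

theorem range_inter :
    Set.range ⇑X.jA ∩ Set.range ⇑X.jB = Set.range (fun c => X.jA (X.iA c)) := by
  apply Set.Subset.antisymm
  · rintro x ⟨⟨a, rfl⟩, ⟨b, hb⟩⟩
    rw [jB_norm] at hb
    by_cases h : b ∈ Set.range ⇑X.iB
    · have h1 : X.norm (.inr b) = .inl (X.iA h.choose) := norm_inr_mem h
      rw [h1] at hb
      exact ⟨h.choose, hb⟩
    · have h1 : X.norm (.inr b) = .inr ⟨b, h⟩ := norm_inr_not h
      rw [h1] at hb
      exact absurd hb (by
        show (Sum.inr _ : X.Del) ≠ Sum.inl _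
        exact fun hh => nomatch hh)
  · rintro x ⟨c, rfl⟩
    exact ⟨⟨X.iA c, rfl⟩, ⟨X.iB c, (jAiA_eq_jBiB c).symm⟩⟩

end Ctx

/-- In the class of linearly ordered sets with one order reversing unary
operation, a structure `C` is a strong amalgamation base if and only if its
operation has a fixed point (a center). -/
theorem antitone_strong_amalgamation_base_iff_center (C : LinOrderAnti) :
    (∀ (A B : LinOrderAnti)
      (iA : C.carrier ↪o A.carrier) (iB : C.carrier ↪o B.carrier),
      (∀ c, iA (C.g c) = A.g (iA c)) →
      (∀ c, iB (C.g c) = B.g (iB c)) →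
      ∃ (D : LinOrderAnti) (jA : A.carrier ↪o D.carrier)
        (jB : B.carrier ↪o D.carrier),
        (∀ a, jA (A.g a) = D.g (jA a)) ∧
        (∀ b, jB (B.g b) = D.g (jB b)) ∧
        (∀ c, jA (iA c) = jB (iB c)) ∧
        Set.range jA ∩ Set.range jB = Set.range (fun c => jA (iA c)))
    ↔ ∃ c, C.g c = c := by
  constructor
  · intro H
    by_contra hno
    push_neg at hno
    obtain ⟨D, jA, jB, hjA, hjB, hji, hrange⟩ :=
      H (StrongAmalgAux.ext C hno) (StrongAmalgAux.ext C hno)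
        (StrongAmalgAux.extEmb C hno) (StrongAmalgAux.extEmb C hno)
        (StrongAmalgAux.extEmb_comm C hno) (StrongAmalgAux.extEmb_comm C hno)
    have h1 : D.g (jA .none) = jA .none := by
      have h := hjA .none
      rw [StrongAmalgAux.ext_g_none] at h
      exact h.symm
    have h2 : D.g (jB .none) = jB .none := by
      have h := hjB .none
      rw [StrongAmalgAux.ext_g_none] at h
      exact h.symm
    have h3 : jA .none = jB .none := StrongAmalgAux.fix_unique D h1 h2
    have h4 : jA (.none : (StrongAmalgAux.ext C hno).carrier) ∈
        Set.range ⇑jA ∩ Set.range ⇑jB := ⟨⟨_, rfl⟩, ⟨_, h3.symm⟩⟩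
    rw [hrange] at h4
    obtain ⟨c, hc⟩ := h4
    have : StrongAmalgAux.extEmb C hno c = .none := jA.injective hc
    exact Option.some_ne_none c this
  · rintro ⟨c0, hc0⟩ A B iA iB hA hB
    exact ⟨(Ctx.mk C A B iA iB hA hB c0 hc0).DD,
      (Ctx.mk C A B iA iB hA hB c0 hc0).jA,
      (Ctx.mk C A B iA iB hA hB c0 hc0).jB,
      Ctx.jA_comm (X := Ctx.mk C A B iA iB hA hB c0 hc0),
      Ctx.jB_comm (X := Ctx.mk C A B iA iB hA hB c0 hc0),
      Ctx.jAiA_eq_jBiB (X := Ctx.mk C A B iA iB hA hB c0 hc0),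
      Ctx.range_inter (X := Ctx.mk C A B iA iB hA hB c0 hc0)⟩
end
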